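/- arXiv:2104.11179 — 2 statements merged into one kernel-verified Lean document; each statement's English description precedes it below -/
import Mathlib

section
/- For any S ⊆ E × ℝ₊₊ and any (y,v) ∈ ΓS, letting (x,u) = Γ(y,v), the proximal normal cone of ΓS at (y,v) is N^P_{ΓS}((y,v)) = {(ζ, −(⟨ζ,x⟩ + δu)) : (ζ,δ) ∈ N^P_S((x,u))}. -/
open Set
open scoped ENNReal RealInnerProductSpace

noncomputable section

variable {E : Type*} [NormedAddCommGroup E] [InnerProductSpace ℝ E] [FiniteDimensional ℝ E]

/-- The radial point transformation `Γ(x,u) = (x/u, 1/u)`. -/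
def radialPoint (p : E × ℝ) : E × ℝ := (p.2⁻¹ • p.1, p.2⁻¹)

/-- The radial set transformation `ΓS = {Γ(x,u) : (x,u) ∈ S}`. -/
def radialSet (S : Set (E × ℝ)) : Set (E × ℝ) := radialPoint '' S

/-- The Euclidean inner product on `E × ℝ`. -/
def iprod (p q : E × ℝ) : ℝ := ⟪p.1, q.1⟫ + p.2 * q.2

/-- Squared Euclidean distance on `E × ℝ`. -/
def sqDist (p q : E × ℝ) : ℝ := ‖p.1 - q.1‖ ^ 2 + (p.2 - q.2) ^ 2

/-- The proximal normal cone of `S` at `p`: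
`{w : p is a (Euclidean) nearest point of S to p + εw for some ε > 0}`. -/
def normalConeP (S : Set (E × ℝ)) (p : E × ℝ) : Set (E × ℝ) :=
  {w : E × ℝ | ∃ ε : ℝ, 0 < ε ∧ ∀ q ∈ S, sqDist (p + ε • w) p ≤ sqDist (p + ε • w) q}

set_option linter.unusedSectionVars false

lemma sqDist_nonneg' (p q : E × ℝ) : 0 ≤ sqDist p q := by unfold sqDist; positivity

lemma dist_sq_le_sqDist (p q : E × ℝ) : dist p q ^ 2 ≤ sqDist p q := by
  rw [Prod.dist_eq, sqDist, dist_eq_norm, Real.dist_eq]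
  rcases max_cases (‖p.1 - q.1‖) (|p.2 - q.2|) with ⟨h, _⟩ | ⟨h, _⟩ <;> rw [h] <;>
    nlinarith [sq_abs (p.2 - q.2), sq_nonneg (p.2 - q.2), norm_nonneg (p.1 - q.1), sq_nonneg ‖p.1 - q.1‖]

lemma sqDist_le_two_dist_sq (p q : E × ℝ) : sqDist p q ≤ 2 * dist p q ^ 2 := by
  rw [Prod.dist_eq, sqDist, dist_eq_norm, Real.dist_eq]
  have h1 : ‖p.1 - q.1‖ ≤ max ‖p.1 - q.1‖ |p.2 - q.2| := le_max_left _ _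
  have h2 : |p.2 - q.2| ≤ max ‖p.1 - q.1‖ |p.2 - q.2| := le_max_right _ _
  nlinarith [sq_abs (p.2 - q.2), norm_nonneg (p.1 - q.1), abs_nonneg (p.2 - q.2)]

lemma key_ineq (p q w : E × ℝ) (ε : ℝ) :
    sqDist (p + ε • w) p ≤ sqDist (p + ε • w) q ↔ 2 * ε * iprod w (q - p) ≤ sqDist q p := by
  have e1 : ‖(p + ε • w).1 - q.1‖ ^ 2
      = ‖p.1 - q.1‖ ^ 2 + 2 * (ε * ⟪p.1 - q.1, w.1⟫) + ε ^ 2 * ‖w.1‖ ^ 2 := by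
    rw [show (p + ε • w).1 - q.1 = (p.1 - q.1) + ε • w.1 from by
      simp [Prod.fst_add]; abel, norm_add_sq_real, real_inner_smul_right, norm_smul]
    simp [mul_pow, Real.norm_eq_abs, sq_abs]
  have e2 : ‖(p + ε • w).1 - p.1‖ ^ 2 = ε ^ 2 * ‖w.1‖ ^ 2 := by
    rw [show (p + ε • w).1 - p.1 = ε • w.1 from by simp [Prod.fst_add], norm_smul]
    simp [mul_pow, Real.norm_eq_abs, sq_abs]
  have e3 : ‖p.1 - q.1‖ ^ 2 = ‖q.1 - p.1‖ ^ 2 := by rw [norm_sub_rev]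
  have e4 : ⟪p.1 - q.1, w.1⟫ = -⟪w.1, q.1 - p.1⟫ := by
    rw [real_inner_comm, ← inner_neg_right, neg_sub]
  simp only [sqDist, iprod, Prod.fst_sub, Prod.snd_sub, Prod.snd_add, Prod.smul_snd,
    smul_eq_mul, e1, e2, e3, e4]
  constructor <;> intro h <;> nlinarith [h]

lemma mem_normalConeP_iff (S : Set (E × ℝ)) (p w : E × ℝ) :
    w ∈ normalConeP S p ↔ ∃ ε : ℝ, 0 < ε ∧ ∀ q ∈ S, 2 * ε * iprod w (q - p) ≤ sqDist q p := by
  unfold normalConeP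
  simp only [mem_setOf_eq]
  exact ⟨fun ⟨ε, hε, h⟩ => ⟨ε, hε, fun q hq => (key_ineq p q w ε).1 (h q hq)⟩,
    fun ⟨ε, hε, h⟩ => ⟨ε, hε, fun q hq => (key_ineq p q w ε).2 (h q hq)⟩⟩

lemma mem_normalConeP_of_local (S : Set (E × ℝ)) (p w : E × ℝ) (ε r : ℝ) (hε : 0 < ε) (hr : 0 < r)
    (h : ∀ q ∈ S, sqDist q p ≤ r ^ 2 → 2 * ε * iprod w (q - p) ≤ sqDist q p) :
    w ∈ normalConeP S p := by
  set M : ℝ := ‖w.1‖ + |w.2| + 1 with hMdef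
  have hM : 0 < M := by positivity
  refine (mem_normalConeP_iff S p w).2 ⟨min ε (r / (2 * M)), by positivity, fun q hq => ?_⟩
  have hD : 0 ≤ sqDist q p := sqDist_nonneg' q p
  have hle1 : min ε (r / (2 * M)) ≤ ε := min_le_left _ _
  have hle2 : min ε (r / (2 * M)) ≤ r / (2 * M) := min_le_right _ _
  have hpos' : 0 < min ε (r / (2 * M)) := by positivity
  by_cases hnear : sqDist q p ≤ r ^ 2
  · have hI := h q hq hnear
    rcases le_or_gt (iprod w (q - p)) 0 with hI0 | hI0
    · nlinarith
    · nlinarith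
  · -- far case
    set s : ℝ := Real.sqrt (sqDist q p) with hs
    have hs2 : s ^ 2 = sqDist q p := Real.sq_sqrt hD
    have hsr : r ≤ s := by
      nlinarith [Real.sqrt_nonneg (sqDist q p)]
    have hb1 : ‖(q - p).1‖ ≤ s := by
      have : ‖(q - p).1‖ ^ 2 ≤ s ^ 2 := by
        rw [hs2]; simp only [sqDist, Prod.fst_sub, Prod.snd_sub]
        nlinarith [sq_nonneg ((q - p).2)]
      nlinarith [norm_nonneg (q - p).1, Real.sqrt_nonneg (sqDist q p)]
    have hb2 : |(q - p).2| ≤ s := by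
      have : |(q - p).2| ^ 2 ≤ s ^ 2 := by
        rw [hs2]; simp only [sqDist, Prod.fst_sub, Prod.snd_sub, sq_abs]
        nlinarith [sq_nonneg ‖q.1 - p.1‖]
      nlinarith [abs_nonneg (q - p).2, Real.sqrt_nonneg (sqDist q p)]
    have hIb : iprod w (q - p) ≤ M * s := by
      have h1 : ⟪w.1, (q - p).1⟫ ≤ ‖w.1‖ * ‖(q - p).1‖ := real_inner_le_norm _ _
      have h2 : w.2 * (q - p).2 ≤ |w.2| * |(q - p).2| := by
        calc w.2 * (q - p).2 ≤ |w.2 * (q - p).2| := le_abs_self _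
        _ = |w.2| * |(q - p).2| := abs_mul _ _
      have hs0 : 0 ≤ s := Real.sqrt_nonneg _
      have : iprod w (q - p) ≤ ‖w.1‖ * s + |w.2| * s := by
        unfold iprod
        nlinarith [norm_nonneg w.1, abs_nonneg w.2]
      nlinarith
    have hs0 : 0 ≤ s := Real.sqrt_nonneg _
    have hMs : (0:ℝ) ≤ M * s := by positivity
    have step1 : 2 * min ε (r / (2 * M)) * iprod w (q - p)
        ≤ 2 * min ε (r / (2 * M)) * (M * s) :=
      mul_le_mul_of_nonneg_left hIb (by positivity)
    have step2 : 2 * min ε (r / (2 * M)) * (M * s) ≤ 2 * (r / (2 * M)) * (M * s) :=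
      mul_le_mul_of_nonneg_right (by linarith) hMs
    have step3 : 2 * (r / (2 * M)) * (M * s) = r * s := by field_simp
    have step4 : r * s ≤ sqDist q p := by nlinarith
    linarith

lemma iprod_radial (x a : E) (u b : ℝ) (hu : u ≠ 0) (hb : b ≠ 0) (ζ : E) (δ : ℝ) :
    iprod (ζ, -(⟪ζ, x⟫ + δ * u)) (radialPoint (a, b) - radialPoint (x, u))
      = b⁻¹ * iprod (ζ, δ) ((a, b) - (x, u)) := by
  simp only [radialPoint, iprod, Prod.fst_sub, Prod.snd_sub, inner_sub_right,
    real_inner_smul_right]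
  field_simp
  ring

lemma radialPoint_invol {p : E × ℝ} (h : p.2 ≠ 0) : radialPoint (radialPoint p) = p := by
  simp [radialPoint, smul_smul, mul_inv_cancel₀ h]

lemma radialSet_invol (S : Set (E × ℝ)) (hpos : ∀ p ∈ S, 0 < p.2) :
    radialSet (radialSet S) = S := by
  unfold radialSet
  rw [← image_comp]
  apply image_congr (fun p hp => radialPoint_invol (hpos p hp).ne') |>.trans
  exact image_id S

lemma radialSet_pos (S : Set (E × ℝ)) (hpos : ∀ p ∈ S, 0 < p.2) :
    ∀ p ∈ radialSet S, 0 < p.2 := by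
  rintro p ⟨q, hq, rfl⟩
  simpa [radialPoint] using inv_pos.2 (hpos q hq)

set_option maxHeartbeats 1000000 in
lemma radial_transfer (S : Set (E × ℝ)) (hpos : ∀ p ∈ S, 0 < p.2) (x : E) (u : ℝ) (hu : 0 < u)
    (ζ : E) (δ : ℝ) (h : (ζ, δ) ∈ normalConeP S (x, u)) :
    (ζ, -(⟪ζ, x⟫ + δ * u)) ∈ normalConeP (radialSet S) (radialPoint (x, u)) := by
  obtain ⟨ε, hε, H⟩ := (mem_normalConeP_iff S (x, u) (ζ, δ)).1 h
  set P : E × ℝ := radialPoint (x, u) with hP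
  have hP2 : P.2 = u⁻¹ := rfl
  have hv : (0:ℝ) < u⁻¹ := inv_pos.2 hu
  -- local Lipschitz property of radialPoint at P
  have hcd : ContDiffAt ℝ 1 (radialPoint : E × ℝ → E × ℝ) P := by
    have h2 : ContDiffAt ℝ 1 (fun p : E × ℝ => p.2) P := contDiffAt_snd
    have hinv : ContDiffAt ℝ 1 (fun p : E × ℝ => p.2⁻¹) P := h2.inv (by rw [hP2]; exact hv.ne')
    exact (hinv.smul contDiffAt_fst).prodMk hinv
  obtain ⟨K, t, ht, hlip⟩ := hcd.exists_lipschitzOnWith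
  obtain ⟨r₀, hr₀, hball⟩ := Metric.mem_nhds_iff.1 ht
  set r : ℝ := min (r₀ / 2) (u⁻¹ / 2) with hrdef
  have hr : 0 < r := by positivity
  set ε' : ℝ := ε / (2 * (2 / u) * ((K : ℝ) ^ 2 + 1)) with hε'def
  have hKpos : (0:ℝ) < 2 * (2 / u) * ((K : ℝ) ^ 2 + 1) := by positivity
  have hε' : 0 < ε' := by positivity
  apply mem_normalConeP_of_local (radialSet S) P _ ε' r hε' hr
  rintro q' ⟨q, hq, rfl⟩ hnear
  obtain ⟨a, b⟩ := q
  have hb : 0 < b := hpos (a, b) hq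
  -- distance control
  have hdq' : dist (radialPoint (a, b)) P ≤ r := by
    have h1 := dist_sq_le_sqDist (radialPoint (a, b)) P
    nlinarith [dist_nonneg (x := radialPoint (a, b)) (y := P)]
  have hmem : radialPoint (a, b) ∈ Metric.ball P r₀ := by
    have : r < r₀ := by
      have : r ≤ r₀ / 2 := min_le_left _ _
      linarith
    exact Metric.mem_ball.2 (lt_of_le_of_lt hdq' this)
  have hPmem : P ∈ t := mem_of_mem_nhds ht
  -- second coordinate bound : radialPoint (a,b) has second coord b⁻¹
  have hb' : |b⁻¹ - u⁻¹| ≤ r := by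
    have h1 : (b⁻¹ - u⁻¹) ^ 2 ≤ sqDist (radialPoint (a, b)) P := by
      simp only [sqDist, hP, radialPoint]
      nlinarith [sq_nonneg ‖b⁻¹ • a - u⁻¹ • x‖]
    have h2 : (b⁻¹ - u⁻¹) ^ 2 ≤ r ^ 2 := le_trans h1 hnear
    nlinarith [sq_abs (b⁻¹ - u⁻¹), abs_nonneg (b⁻¹ - u⁻¹)]
  have hrhalf : r ≤ u⁻¹ / 2 := min_le_right _ _
  have hbinv_lb : u⁻¹ / 2 ≤ b⁻¹ := by
    have := abs_le.1 hb'
    linarith [this.1]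
  have hbinv_ub : b⁻¹ ≤ 2 / u := by
    have := abs_le.1 hb'
    have : b⁻¹ ≤ u⁻¹ + r := by linarith [this.2]
    rw [div_eq_mul_inv]
    linarith
  have hbinv_pos : 0 < b⁻¹ := lt_of_lt_of_le (by positivity) hbinv_lb
  -- Lipschitz estimate : sqDist (a,b) (x,u) ≤ 2 K² sqDist (radialPoint (a,b)) P
  have hIdP : radialPoint P = (x, u) := radialPoint_invol (p := (x, u)) hu.ne'
  have hIdq : radialPoint (radialPoint (a, b)) = (a, b) := radialPoint_invol hb.ne'
  have hlipd : dist (a, b) (x, u) ≤ (K : ℝ) * dist (radialPoint (a, b)) P := by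
    have := hlip.dist_le_mul (radialPoint (a, b)) (hball hmem) P hPmem
    rw [hIdq, hIdP] at this
    exact this
  have hsq : sqDist (a, b) (x, u) ≤ 2 * (K : ℝ) ^ 2 * sqDist (radialPoint (a, b)) P := by
    have h1 := sqDist_le_two_dist_sq ((a, b) : E × ℝ) (x, u)
    have h2 := dist_sq_le_sqDist (radialPoint (a, b)) P
    have hd0 : (0:ℝ) ≤ dist ((a, b) : E × ℝ) (x, u) := dist_nonneg
    have hd0' : (0:ℝ) ≤ dist (radialPoint (a, b)) P := dist_nonneg
    have hK0 : (0:ℝ) ≤ (K : ℝ) := K.coe_nonneg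
    have h3 : dist ((a, b) : E × ℝ) (x, u) ^ 2 ≤ (K : ℝ) ^ 2 * dist (radialPoint (a, b)) P ^ 2 := by
      have := mul_self_le_mul_self hd0 hlipd
      calc dist ((a, b) : E × ℝ) (x, u) ^ 2
          = dist ((a, b) : E × ℝ) (x, u) * dist ((a, b) : E × ℝ) (x, u) := by ring
        _ ≤ ((K : ℝ) * dist (radialPoint (a, b)) P) * ((K : ℝ) * dist (radialPoint (a, b)) P) := this
        _ = (K : ℝ) ^ 2 * dist (radialPoint (a, b)) P ^ 2 := by ring
    have h4 : (K : ℝ) ^ 2 * dist (radialPoint (a, b)) P ^ 2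
        ≤ (K : ℝ) ^ 2 * sqDist (radialPoint (a, b)) P :=
      mul_le_mul_of_nonneg_left h2 (by positivity)
    linarith
  -- the key identity
  have hid : iprod (ζ, -(⟪ζ, x⟫ + δ * u)) (radialPoint (a, b) - P)
      = b⁻¹ * iprod (ζ, δ) ((a, b) - (x, u)) := iprod_radial x a u b hu.ne' hb.ne' ζ δ
  rw [hid]
  have hH := H (a, b) hq
  have hD : 0 ≤ sqDist ((a, b) : E × ℝ) (x, u) := sqDist_nonneg' _ _
  have hQ : 0 ≤ sqDist (radialPoint (a, b)) P := sqDist_nonneg' _ _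
  -- 2 ε' b⁻¹ I ≤ (ε'/ε) b⁻¹ D ≤ (ε'/ε) (2/u) 2K² Q ≤ Q
  have step1 : 2 * ε' * (b⁻¹ * iprod (ζ, δ) ((a, b) - (x, u)))
      ≤ (ε' / ε) * (b⁻¹ * sqDist ((a, b) : E × ℝ) (x, u)) := by
    have hc : 0 ≤ ε' * b⁻¹ / ε := by positivity
    have := mul_le_mul_of_nonneg_left hH hc
    calc 2 * ε' * (b⁻¹ * iprod (ζ, δ) ((a, b) - (x, u)))
        = (ε' * b⁻¹ / ε) * (2 * ε * iprod (ζ, δ) ((a, b) - (x, u))) := by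
          field_simp
      _ ≤ (ε' * b⁻¹ / ε) * sqDist ((a, b) : E × ℝ) (x, u) := this
      _ = (ε' / ε) * (b⁻¹ * sqDist ((a, b) : E × ℝ) (x, u)) := by ring
  have step2 : (ε' / ε) * (b⁻¹ * sqDist ((a, b) : E × ℝ) (x, u))
      ≤ (ε' / ε) * ((2 / u) * (2 * (K : ℝ) ^ 2 * sqDist (radialPoint (a, b)) P)) := by
    apply mul_le_mul_of_nonneg_left _ (by positivity)
    calc b⁻¹ * sqDist ((a, b) : E × ℝ) (x, u)
        ≤ (2 / u) * sqDist ((a, b) : E × ℝ) (x, u) :=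
          mul_le_mul_of_nonneg_right hbinv_ub hD
      _ ≤ (2 / u) * (2 * (K : ℝ) ^ 2 * sqDist (radialPoint (a, b)) P) :=
          mul_le_mul_of_nonneg_left hsq (by positivity)
  have step3 : (ε' / ε) * ((2 / u) * (2 * (K : ℝ) ^ 2 * sqDist (radialPoint (a, b)) P))
      ≤ sqDist (radialPoint (a, b)) P := by
    have hcoef : (ε' / ε) * ((2 / u) * (2 * (K : ℝ) ^ 2)) ≤ 1 := by
      have hεε : ε' / ε = 1 / (2 * (2 / u) * ((K : ℝ) ^ 2 + 1)) := by
        rw [hε'def, div_right_comm, div_self hε.ne']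
      rw [hεε, div_mul_eq_mul_div, one_mul, div_le_one hKpos]
      have hu2 : (0:ℝ) < 2 / u := by positivity
      nlinarith
    calc (ε' / ε) * ((2 / u) * (2 * (K : ℝ) ^ 2 * sqDist (radialPoint (a, b)) P))
        = ((ε' / ε) * ((2 / u) * (2 * (K : ℝ) ^ 2))) * sqDist (radialPoint (a, b)) P := by ring
      _ ≤ 1 * sqDist (radialPoint (a, b)) P := mul_le_mul_of_nonneg_right hcoef hQ
      _ = sqDist (radialPoint (a, b)) P := one_mul _
  linarith

/-- Proximal normal vectors under the radial set transformation: for `(y,v) ∈ ΓS` and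
`(x,u) = Γ(y,v)`, `N^P_{ΓS}((y,v)) = {(ζ, −(⟨ζ,x⟩ + δu)) : (ζ,δ) ∈ N^P_S((x,u))}`. -/
theorem radialSet_proximal_normals (S : Set (E × ℝ)) (hpos : ∀ p ∈ S, 0 < p.2)
    (y : E) (v : ℝ) (hyv : (y, v) ∈ radialSet S) :
    normalConeP (radialSet S) (y, v) =
      {w : E × ℝ | ∃ ζ : E, ∃ δ : ℝ,
        (ζ, δ) ∈ normalConeP S (v⁻¹ • y, v⁻¹) ∧
        w = (ζ, -(⟪ζ, v⁻¹ • y⟫ + δ * v⁻¹))} := by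
  have hv : 0 < v := by
    obtain ⟨p0, hp0, heq⟩ := hyv
    have h2 : p0.2⁻¹ = v := congrArg Prod.snd heq
    rw [← h2]
    exact inv_pos.2 (hpos p0 hp0)
  have hu : 0 < v⁻¹ := inv_pos.2 hv
  have hRP : radialPoint ((v⁻¹ • y, v⁻¹) : E × ℝ) = (y, v) := by
    simp [radialPoint, smul_smul, mul_inv_cancel₀ hv.ne']
  ext w
  simp only [mem_setOf_eq]
  constructor
  · intro hw
    refine ⟨w.1, -(⟪w.1, y⟫ + w.2 * v), ?_, ?_⟩
    · have hw' : ((w.1, w.2) : E × ℝ) ∈ normalConeP (radialSet S) (y, v) := hw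
      have h3 := radial_transfer (radialSet S) (radialSet_pos S hpos) y v hv w.1 w.2 hw'
      rw [radialSet_invol S hpos] at h3
      exact h3
    · have hinner : ⟪w.1, v⁻¹ • y⟫ = v⁻¹ * ⟪w.1, y⟫ := real_inner_smul_right _ _ _
      refine Prod.ext rfl ?_
      simp only [hinner]
      field_simp
      ring
  · rintro ⟨ζ, δ, hζδ, rfl⟩
    have h3 := radial_transfer S hpos (v⁻¹ • y) v⁻¹ hu ζ δ hζδ
    rw [hRP] at h3
    exact h3
end
end

section
/- If f : E → [0,∞] is quasiconcave, then f^Γ is quasiconvex; if in addition for every y ∈ E the map v ↦ f^p(y,v) is nondecreasing on ℝ₊₊, then f_Γ is also quasiconvex. Likewise, if f is quasiconvex, then f_Γ is quasiconcave; if in addition v ↦ f^p(y,v) is nondecreasing for every y, then f^Γ is also quasiconcave. -/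
open Set
open scoped ENNReal RealInnerProductSpace

noncomputable section

variable {E : Type*} [NormedAddCommGroup E] [InnerProductSpace ℝ E] [FiniteDimensional ℝ E]

/-- The perspective function `f^p(y,v) = v·f(y/v)` (for `v > 0`). -/
def persp (f : E → ℝ≥0∞) (y : E) (v : ℝ) : ℝ≥0∞ := ENNReal.ofReal v * f (v⁻¹ • y)

/-- The upper radial transformation `f^Γ(y) = sup{v > 0 : v·f(y/v) ≤ 1}` (`sup ∅ = 0`). -/
def radSup (f : E → ℝ≥0∞) (y : E) : ℝ≥0∞ :=
  ⨆ (v : ℝ) (_ : 0 < v) (_ : persp f y v ≤ 1), ENNReal.ofReal v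

/-- The lower radial transformation `f_Γ(y) = inf{v > 0 : v·f(y/v) ≥ 1}` (`inf ∅ = ∞`). -/
def radInf (f : E → ℝ≥0∞) (y : E) : ℝ≥0∞ :=
  ⨅ (v : ℝ) (_ : 0 < v) (_ : 1 ≤ persp f y v), ENNReal.ofReal v

/-- `f` is quasiconcave: superlevel sets `{x : f(x) ≥ z}` are convex for all `z > 0`. -/
def QuasiconcaveFun (f : E → ℝ≥0∞) : Prop :=
  ∀ z : ℝ, 0 < z → Convex ℝ {x : E | ENNReal.ofReal z ≤ f x}

/-- `f` is quasiconvex: sublevel sets `{x : f(x) ≤ z}` are convex for all `z > 0`. -/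
def QuasiconvexFun (f : E → ℝ≥0∞) : Prop :=
  ∀ z : ℝ, 0 < z → Convex ℝ {x : E | f x ≤ ENNReal.ofReal z}
lemma aux_one {v : ℝ} (hv : 0 < v) : ENNReal.ofReal v * ENNReal.ofReal v⁻¹ = 1 := by
  rw [← ENNReal.ofReal_mul hv.le, mul_inv_cancel₀ hv.ne', ENNReal.ofReal_one]

lemma persp_le_one {f : E → ℝ≥0∞} {y : E} {v : ℝ} (hv : 0 < v) :
    persp f y v ≤ 1 ↔ f (v⁻¹ • y) ≤ ENNReal.ofReal v⁻¹ := by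
  rw [persp, ← aux_one hv]
  exact ENNReal.mul_le_mul_iff_right (ENNReal.ofReal_pos.2 hv).ne' ENNReal.ofReal_ne_top

lemma one_le_persp {f : E → ℝ≥0∞} {y : E} {v : ℝ} (hv : 0 < v) :
    1 ≤ persp f y v ↔ ENNReal.ofReal v⁻¹ ≤ f (v⁻¹ • y) := by
  rw [persp, ← aux_one hv]
  exact ENNReal.mul_le_mul_iff_right (ENNReal.ofReal_pos.2 hv).ne' ENNReal.ofReal_ne_top

lemma persp_lt_one {f : E → ℝ≥0∞} {y : E} {v : ℝ} (hv : 0 < v) :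
    persp f y v < 1 ↔ f (v⁻¹ • y) < ENNReal.ofReal v⁻¹ := by
  rw [persp, ← aux_one hv]
  exact ENNReal.mul_lt_mul_iff_right (ENNReal.ofReal_pos.2 hv).ne' ENNReal.ofReal_ne_top

lemma one_lt_persp {f : E → ℝ≥0∞} {y : E} {v : ℝ} (hv : 0 < v) :
    1 < persp f y v ↔ ENNReal.ofReal v⁻¹ < f (v⁻¹ • y) := by
  rw [persp, ← aux_one hv]
  exact ENNReal.mul_lt_mul_iff_right (ENNReal.ofReal_pos.2 hv).ne' ENNReal.ofReal_ne_top

lemma combo_eq {v a b : ℝ} (y₁ y₂ : E) :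
    v⁻¹ • (a • y₁ + b • y₂) = a • (v⁻¹ • y₁) + b • (v⁻¹ • y₂) := by
  rw [smul_add, smul_comm v⁻¹ a, smul_comm v⁻¹ b]

lemma radSup_le_iff {f : E → ℝ≥0∞} {y : E} {z : ℝ} (hz : 0 < z) :
    radSup f y ≤ ENNReal.ofReal z ↔ ∀ v, z < v → 1 < persp f y v := by
  constructor
  · intro h v hv
    by_contra hle
    push_neg at hle
    have h1 : ENNReal.ofReal v ≤ radSup f y :=
      le_iSup_of_le v (le_iSup_of_le (hz.trans hv) (le_iSup_of_le hle le_rfl))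
    exact absurd ((ENNReal.ofReal_le_ofReal_iff hz.le).1 (h1.trans h)) (not_le.2 hv)
  · intro h
    refine iSup_le fun v => iSup_le fun hv => iSup_le fun hp => ENNReal.ofReal_le_ofReal ?_
    by_contra hzv
    push_neg at hzv
    exact absurd hp (not_le.2 (h v hzv))

lemma le_radInf_iff {f : E → ℝ≥0∞} {y : E} {z : ℝ} (hz : 0 < z) :
    ENNReal.ofReal z ≤ radInf f y ↔ ∀ v, 0 < v → v < z → persp f y v < 1 := by
  constructor
  · intro h v hv hvz
    by_contra hge
    push_neg at hge
    have h1 : radInf f y ≤ ENNReal.ofReal v :=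
      iInf_le_of_le v (iInf_le_of_le hv (iInf_le_of_le hge le_rfl))
    exact absurd ((ENNReal.ofReal_le_ofReal_iff hv.le).1 (h.trans h1)) (not_le.2 hvz)
  · intro h
    refine le_iInf fun v => le_iInf fun hv => le_iInf fun hge => ENNReal.ofReal_le_ofReal ?_
    by_contra hvz
    push_neg at hvz
    exact absurd hge (not_le.2 (h v hv hvz))

lemma radInf_le_iff {f : E → ℝ≥0∞} {y : E} (hm : MonotoneOn (persp f y) (Ioi (0 : ℝ)))
    {z : ℝ} (hz : 0 < z) :
    radInf f y ≤ ENNReal.ofReal z ↔ ∀ v, z < v → 1 ≤ persp f y v := by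
  constructor
  · intro h v hv
    have hlt : radInf f y < ENNReal.ofReal v :=
      h.trans_lt ((ENNReal.ofReal_lt_ofReal_iff (hz.trans hv)).2 hv)
    rw [radInf] at hlt
    simp only [iInf_lt_iff] at hlt
    obtain ⟨w, hw0, hw1, hwv⟩ := hlt
    have hwv' : w < v := (ENNReal.ofReal_lt_ofReal_iff (hz.trans hv)).1 hwv
    exact hw1.trans (hm (mem_Ioi.2 hw0) (mem_Ioi.2 (hz.trans hv)) hwv'.le)
  · intro h
    refine le_of_forall_gt_imp_ge_of_dense fun c hc => ?_
    obtain ⟨r, hr0, hzr, hrc⟩ := ENNReal.lt_iff_exists_real_btwn.1 hc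
    have hzr' : z < r := by
      by_contra hh; push_neg at hh
      exact absurd (ENNReal.ofReal_le_ofReal hh) (not_le.2 hzr)
    exact (iInf_le_of_le r (iInf_le_of_le (hz.trans hzr')
      (iInf_le_of_le (h r hzr') le_rfl))).trans hrc.le

lemma le_radSup_iff {f : E → ℝ≥0∞} {y : E} (hm : MonotoneOn (persp f y) (Ioi (0 : ℝ)))
    {z : ℝ} (hz : 0 < z) :
    ENNReal.ofReal z ≤ radSup f y ↔ ∀ v, 0 < v → v < z → persp f y v ≤ 1 := by
  constructor
  · intro h v hv0 hvz
    have hlt : ENNReal.ofReal v < radSup f y :=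
      ((ENNReal.ofReal_lt_ofReal_iff hz).2 hvz).trans_le h
    rw [radSup] at hlt
    simp only [lt_iSup_iff] at hlt
    obtain ⟨w, hw0, hw1, hvw⟩ := hlt
    have hvw' : v < w := (ENNReal.ofReal_lt_ofReal_iff hw0).1 hvw
    exact (hm (mem_Ioi.2 hv0) (mem_Ioi.2 hw0) hvw'.le).trans hw1
  · intro h
    refine le_of_forall_lt_imp_le_of_dense fun c hc => ?_
    obtain ⟨r, hr0, hcr, hrz⟩ := ENNReal.lt_iff_exists_real_btwn.1 hc
    have hr0' : 0 < r := ENNReal.ofReal_pos.1 ((zero_le : (0:ℝ≥0∞) ≤ c).trans_lt hcr)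
    have hrz' : r < z := (ENNReal.ofReal_lt_ofReal_iff hz).1 hrz
    exact hcr.le.trans (le_iSup_of_le r (le_iSup_of_le hr0'
      (le_iSup_of_le (h r hr0' hrz') le_rfl)))

lemma qc_strict {f : E → ℝ≥0∞} (hf : QuasiconcaveFun f) {c : ℝ≥0∞} {x₁ x₂ : E}
    (h₁ : c < f x₁) (h₂ : c < f x₂) {a b : ℝ} (ha : 0 ≤ a) (hb : 0 ≤ b) (hab : a + b = 1) :
    c < f (a • x₁ + b • x₂) := by
  obtain ⟨r, hr0, hcr, hrm⟩ := ENNReal.lt_iff_exists_real_btwn.1 (lt_min h₁ h₂)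
  have hr0' : 0 < r := ENNReal.ofReal_pos.1 ((zero_le : (0:ℝ≥0∞) ≤ c).trans_lt hcr)
  have hx := hf r hr0' (le_of_lt (hrm.trans_le (min_le_left _ _)))
    (le_of_lt (hrm.trans_le (min_le_right _ _))) ha hb hab
  exact hcr.trans_le hx

lemma qcx_strict {f : E → ℝ≥0∞} (hf : QuasiconvexFun f) {c : ℝ≥0∞} {x₁ x₂ : E}
    (h₁ : f x₁ < c) (h₂ : f x₂ < c) {a b : ℝ} (ha : 0 ≤ a) (hb : 0 ≤ b) (hab : a + b = 1) :
    f (a • x₁ + b • x₂) < c := by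
  obtain ⟨r, hr0, hmr, hrc⟩ := ENNReal.lt_iff_exists_real_btwn.1 (max_lt h₁ h₂)
  have hr0' : 0 < r := ENNReal.ofReal_pos.1 ((zero_le : (0:ℝ≥0∞) ≤ _).trans_lt hmr)
  have hx := hf r hr0' (le_of_lt ((le_max_left _ _).trans_lt hmr))
    (le_of_lt ((le_max_right _ _).trans_lt hmr)) ha hb hab
  exact hx.trans_lt hrc

/-- If `f` is quasiconcave then `f^Γ` is quasiconvex (and `f_Γ` as well when every
`f^p(y,·)` is nondecreasing); if `f` is quasiconvex then `f_Γ` is quasiconcave (and `f^Γ`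
as well when every `f^p(y,·)` is nondecreasing). -/
theorem radial_quasiconvexity (f : E → ℝ≥0∞) :
    (QuasiconcaveFun f →
      QuasiconvexFun (radSup f) ∧
      ((∀ y : E, MonotoneOn (persp f y) (Ioi (0 : ℝ))) → QuasiconvexFun (radInf f))) ∧
    (QuasiconvexFun f →
      QuasiconcaveFun (radInf f) ∧
      ((∀ y : E, MonotoneOn (persp f y) (Ioi (0 : ℝ))) → QuasiconcaveFun (radSup f))) := by
  constructor
  · intro hf
    constructor
    · intro z hz y₁ h₁ y₂ h₂ a b ha hb hab
      simp only [mem_setOf_eq, radSup_le_iff hz] at h₁ h₂ ⊢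
      intro v hzv
      have hv0 : 0 < v := hz.trans hzv
      rw [one_lt_persp hv0, combo_eq]
      have k₁ := (one_lt_persp hv0).1 (h₁ v hzv)
      have k₂ := (one_lt_persp hv0).1 (h₂ v hzv)
      exact qc_strict hf k₁ k₂ ha hb hab
    · intro hm z hz y₁ h₁ y₂ h₂ a b ha hb hab
      simp only [mem_setOf_eq, radInf_le_iff (hm _) hz] at h₁ h₂ ⊢
      intro v hzv
      have hv0 : 0 < v := hz.trans hzv
      rw [one_le_persp hv0, combo_eq]
      have k₁ := (one_le_persp hv0).1 (h₁ v hzv)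
      have k₂ := (one_le_persp hv0).1 (h₂ v hzv)
      exact hf v⁻¹ (inv_pos.2 hv0) k₁ k₂ ha hb hab
  · intro hf
    constructor
    · intro z hz y₁ h₁ y₂ h₂ a b ha hb hab
      simp only [mem_setOf_eq, le_radInf_iff hz] at h₁ h₂ ⊢
      intro v hv0 hvz
      rw [persp_lt_one hv0, combo_eq]
      have k₁ := (persp_lt_one hv0).1 (h₁ v hv0 hvz)
      have k₂ := (persp_lt_one hv0).1 (h₂ v hv0 hvz)
      exact qcx_strict hf k₁ k₂ ha hb hab
    · intro hm z hz y₁ h₁ y₂ h₂ a b ha hb hab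
      simp only [mem_setOf_eq, le_radSup_iff (hm _) hz] at h₁ h₂ ⊢
      intro v hv0 hvz
      rw [persp_le_one hv0, combo_eq]
      have k₁ := (persp_le_one hv0).1 (h₁ v hv0 hvz)
      have k₂ := (persp_le_one hv0).1 (h₂ v hv0 hvz)
      exact hf v⁻¹ (inv_pos.2 hv0) k₁ k₂ ha hb hab
end
end
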